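/- Let F ⊆ ℝ^N be a nonempty compact convex set. Then the set Θ of vectors R ∈ ℝ^N such that the linear functional z ↦ ⟨R, z⟩ has more than one minimizer on F has Lebesgue measure zero in ℝ^N; equivalently, for almost every R ∈ ℝ^N the minimizer of ⟨R, ·⟩ over F is unique. -/

import Mathlib

open MeasureTheory

/-- For a nonempty compact convex set `F ⊆ ℝ^N`, the set of
linear objectives `R` having more than one minimizer on `F` has Lebesgue
measure zero. -/
theorem measure_zero_of_nonunique_minimizers
    (N : ℕ) (F : Set (Fin N → ℝ)) (hne : F.Nonempty)
    (hcomp : IsCompact F) (hconv : Convex ℝ F) :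
    volume {R : Fin N → ℝ | ∃ z₁ ∈ F, ∃ z₂ ∈ F, z₁ ≠ z₂ ∧
      (∀ z ∈ F, ∑ i, R i * z₁ i ≤ ∑ i, R i * z i) ∧
      (∀ z ∈ F, ∑ i, R i * z₂ i ≤ ∑ i, R i * z i)} = 0 := by
  classical
  -- bound on F
  obtain ⟨M₀, hM₀⟩ := hcomp.isBounded.exists_norm_le
  set M : ℝ := max M₀ 0 with hMdef
  have hM0 : 0 ≤ M := le_max_right _ _
  have hM : ∀ z ∈ F, ‖z‖ ≤ M := fun z hz => (hM₀ z hz).trans (le_max_left _ _)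
  -- the objective function
  set φ : (Fin N → ℝ) → ℝ := fun R => sInf ((fun z => ∑ i, R i * z i) '' F) with hφdef
  have hcont : ∀ R : Fin N → ℝ, Continuous (fun z : Fin N → ℝ => ∑ i, R i * z i) := by
    intro R
    exact continuous_finset_sum _ fun i _ => continuous_const.mul (continuous_apply i)
  have hbdd : ∀ R : Fin N → ℝ, BddBelow ((fun z => ∑ i, R i * z i) '' F) := fun R =>
    (hcomp.image (hcont R)).bddBelow
  have hφle : ∀ (R : Fin N → ℝ) (z : Fin N → ℝ), z ∈ F → φ R ≤ ∑ i, R i * z i := by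
    intro R z hz
    exact csInf_le (hbdd R) ⟨z, hz, rfl⟩
  have hmin : ∀ R : Fin N → ℝ, ∃ z ∈ F, φ R = ∑ i, R i * z i := by
    intro R
    obtain ⟨z, hz, hzmin⟩ := hcomp.exists_isMinOn hne (hcont R).continuousOn
    refine ⟨z, hz, le_antisymm (hφle R z hz) ?_⟩
    exact le_csInf (hne.image _) (by rintro _ ⟨w, hw, rfl⟩; exact isMinOn_iff.mp hzmin w hw)
  -- Lipschitz bound
  have key : ∀ R₁ R₂ : Fin N → ℝ, φ R₁ ≤ φ R₂ + (N * M) * ‖R₁ - R₂‖ := by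
    intro R₁ R₂
    obtain ⟨z, hz, hzeq⟩ := hmin R₂
    have h1 : φ R₁ ≤ ∑ i, R₁ i * z i := hφle R₁ z hz
    have h2 : ∑ i, R₁ i * z i - ∑ i, R₂ i * z i ≤ (N * M) * ‖R₁ - R₂‖ := by
      rw [← Finset.sum_sub_distrib]
      calc ∑ i, (R₁ i * z i - R₂ i * z i) ≤ ∑ i : Fin N, ‖R₁ - R₂‖ * M := by
            refine Finset.sum_le_sum fun i _ => ?_
            rw [← sub_mul]
            calc (R₁ i - R₂ i) * z i ≤ |(R₁ i - R₂ i) * z i| := le_abs_self _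
              _ = |R₁ i - R₂ i| * |z i| := abs_mul _ _
              _ ≤ ‖R₁ - R₂‖ * M := by
                  refine mul_le_mul ?_ ?_ (abs_nonneg _) (norm_nonneg _)
                  · exact (norm_le_pi_norm (R₁ - R₂) i)
                  · exact (norm_le_pi_norm z i).trans (hM z hz)
        _ = (N * M) * ‖R₁ - R₂‖ := by
            simp [Finset.sum_const, Finset.card_univ]; ring
    linarith
  have hlip : LipschitzWith (Real.toNNReal (N * M)) φ := by
    rw [lipschitzWith_iff_dist_le_mul]
    intro R₁ R₂
    have hNM : (0:ℝ) ≤ N * M := by positivity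
    rw [Real.dist_eq, Real.coe_toNNReal _ hNM, dist_eq_norm, abs_sub_le_iff]
    have h1 := key R₁ R₂
    have h2 := key R₂ R₁
    rw [norm_sub_rev] at h2
    constructor <;> linarith
  -- a.e. differentiability (Rademacher)
  have hdiff : ∀ᵐ R : Fin N → ℝ, DifferentiableAt ℝ φ R := hlip.ae_differentiableAt
  -- the linear functional associated to z
  have Lkey : ∀ (R z : Fin N → ℝ), z ∈ F →
      (∀ w ∈ F, ∑ i, R i * z i ≤ ∑ i, R i * w i) → DifferentiableAt ℝ φ R →
      fderiv ℝ φ R = ∑ i, z i • (ContinuousLinearMap.proj (R := ℝ) (φ := fun _ : Fin N => ℝ) i) := by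
    intro R z hz hzmin hRdiff
    set L : (Fin N → ℝ) →L[ℝ] ℝ :=
      ∑ i, z i • (ContinuousLinearMap.proj (R := ℝ) (φ := fun _ : Fin N => ℝ) i) with hLdef
    have hLapp : ∀ v : Fin N → ℝ, L v = ∑ i, z i * v i := by
      intro v
      simp [hLdef, ContinuousLinearMap.sum_apply, ContinuousLinearMap.smul_apply,
        ContinuousLinearMap.proj_apply, smul_eq_mul]
    -- g has a global minimum at R
    set g : (Fin N → ℝ) → ℝ := fun R' => L R' - φ R' with hgdef
    have hg0 : g R = 0 := by
      have hφR : φ R = ∑ i, R i * z i := by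
        obtain ⟨w, hw, hweq⟩ := hmin R
        refine le_antisymm (hφle R z hz) ?_
        rw [hweq]; exact hzmin w hw
      simp only [hgdef, hLapp, hφR, sub_eq_zero]
      exact Finset.sum_congr rfl fun i _ => mul_comm _ _
    have hgnonneg : ∀ R' : Fin N → ℝ, 0 ≤ g R' := by
      intro R'
      have := hφle R' z hz
      have : φ R' ≤ L R' := by
        rw [hLapp]
        calc φ R' ≤ ∑ i, R' i * z i := hφle R' z hz
          _ = ∑ i, z i * R' i := Finset.sum_congr rfl fun i _ => mul_comm _ _
      simp [hgdef]; linarith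
    have hlm : IsLocalMin g R := by
      refine Filter.Eventually.of_forall fun R' => ?_
      rw [hg0]; exact hgnonneg R'
    have hgdiff : DifferentiableAt ℝ g R := (L.differentiableAt).sub hRdiff
    have hfd : fderiv ℝ g R = 0 := hlm.fderiv_eq_zero
    have : fderiv ℝ g R = L - fderiv ℝ φ R := by
      rw [hgdef]
      rw [fderiv_fun_sub L.differentiableAt hRdiff, L.fderiv]
    rw [this] at hfd
    have : L = fderiv ℝ φ R := by
      have := sub_eq_zero.mp hfd
      exact this
    exact this.symm
  -- conclusion: bad set is contained in non-differentiability set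
  refine measure_mono_null ?_ (by simpa [ae_iff] using hdiff)
  rintro R ⟨z₁, hz₁, z₂, hz₂, hne12, hmin1, hmin2⟩
  simp only [Set.mem_setOf_eq]
  intro hRdiff
  have h1 := Lkey R z₁ hz₁ hmin1 hRdiff
  have h2 := Lkey R z₂ hz₂ hmin2 hRdiff
  apply hne12
  funext j
  have := h1.symm.trans h2
  have happ := congrArg (fun (T : (Fin N → ℝ) →L[ℝ] ℝ) => T (Pi.single j 1)) this
  simpa [ContinuousLinearMap.sum_apply, ContinuousLinearMap.smul_apply,
    ContinuousLinearMap.proj_apply, Pi.single_apply, Finset.sum_ite_eq',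
    smul_eq_mul, mul_ite, mul_one, mul_zero] using happ
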